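/- For every η-admissible permutation σ, |N^+_σ[⪯]| = inv(N(π_η(σ^{-1}))), i.e. the number of pairs (i,j) with σ(i)<j, σ^{-1}(j)<i, π_η(i) ≤ π_η(j) and π_η(i) ≤ π_η(σ(i)) equals the number of inversions of the non-exceeding subword of π_η(σ^{-1}). -/

import Mathlib

open Finset

noncomputable section
open scoped Classical

/-- 0-based block index of position `i` (0-based) with respect to the composition
`η` with `r` parts: the number of complete blocks that end at or before position `i`. -/
def blk (r : ℕ) (η : ℕ → ℕ) (i : ℕ) : ℕ :=
  ((Finset.range r).filter (fun k => ∑ j ∈ Finset.range (k + 1), η j ≤ i)).card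

/-- Descent set of a word of length `n` (0-based positions `i` with `w i > w (i+1)`). -/
def desSet (n : ℕ) (w : Fin n → ℕ) : Finset (Fin n) :=
  Finset.univ.filter (fun i => ∃ h : i.1 + 1 < n, w ⟨i.1 + 1, h⟩ < w i)

/-- Descent number. -/
def des (n : ℕ) (w : Fin n → ℕ) : ℕ := (desSet n w).card

/-- Major index (descents counted in 1-based positions). -/
def maj (n : ℕ) (w : Fin n → ℕ) : ℕ := ∑ i ∈ desSet n w, (i.1 + 1)

/-- Excedance set of a word w.r.t. the trivial word of `η`. -/
def excSet (r : ℕ) (η : ℕ → ℕ) (n : ℕ) (w : Fin n → ℕ) : Finset (Fin n) :=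
  Finset.univ.filter (fun i => blk r η i.1 < w i)

/-- Excedance number. -/
def exc (r : ℕ) (η : ℕ → ℕ) (n : ℕ) (w : Fin n → ℕ) : ℕ := (excSet r η n w).card

/-- Weak inversions of the exceeding subword. -/
def imvE (r : ℕ) (η : ℕ → ℕ) (n : ℕ) (w : Fin n → ℕ) : ℕ :=
  (Finset.univ.filter (fun p : Fin n × Fin n => p.1 < p.2 ∧
    blk r η p.1.1 < w p.1 ∧ blk r η p.2.1 < w p.2 ∧ w p.2 ≤ w p.1)).card

/-- Inversions of the non-exceeding subword. -/
def invN (r : ℕ) (η : ℕ → ℕ) (n : ℕ) (w : Fin n → ℕ) : ℕ :=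
  (Finset.univ.filter (fun p : Fin n × Fin n => p.1 < p.2 ∧
    ¬ blk r η p.1.1 < w p.1 ∧ ¬ blk r η p.2.1 < w p.2 ∧ w p.2 < w p.1)).card

/-- Han's Denert statistic on multiset permutations. -/
def denh (r : ℕ) (η : ℕ → ℕ) (n : ℕ) (w : Fin n → ℕ) : ℕ :=
  (∑ i ∈ excSet r η n w, (i.1 + 1)) + imvE r η n w + invN r η n w

/-- The set `S_η` of multiset permutations: all rearrangements of the trivial word. -/
def msetPerms (r : ℕ) (η : ℕ → ℕ) (n : ℕ) : Finset (Fin n → ℕ) :=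
  (Finset.univ : Finset (Equiv.Perm (Fin n))).image (fun σ i => blk r η (σ i).1)

/-- `η`-admissible permutations: `Des(σ) ⊆ Des(η)`. -/
def admissible (r : ℕ) (η : ℕ → ℕ) (n : ℕ) (σ : Equiv.Perm (Fin n)) : Prop :=
  ∀ i : Fin n, ∀ h : i.1 + 1 < n, σ ⟨i.1 + 1, h⟩ < σ i → blk r η i.1 < blk r η (i.1 + 1)

/-- The multiset permutation `π_η(σ⁻¹)` associated with `σ ∈ S_n`. -/
def wordOf (r : ℕ) (η : ℕ → ℕ) (n : ℕ) (σ : Equiv.Perm (Fin n)) : Fin n → ℕ :=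
  fun j => blk r η ((σ⁻¹ j).1)

/-- The set `I_σ = {j : π_η(σ⁻¹(j)) > π_η(j)}`. -/
def Iset (r : ℕ) (η : ℕ → ℕ) (n : ℕ) (σ : Equiv.Perm (Fin n)) : Finset (Fin n) :=
  Finset.univ.filter (fun j => blk r η j.1 < blk r η ((σ⁻¹ j).1))

def iexc (r : ℕ) (η : ℕ → ℕ) (n : ℕ) (σ : Equiv.Perm (Fin n)) : ℕ := (Iset r η n σ).card

/-- `N⁺_σ`. -/
def Nplus (r : ℕ) (η : ℕ → ℕ) (n : ℕ) (σ : Equiv.Perm (Fin n)) : Finset (Fin n × Fin n) :=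
  Finset.univ.filter (fun p => blk r η p.1.1 ≤ blk r η p.2.1 ∧ σ p.1 < p.2 ∧ σ⁻¹ p.2 < p.1)

/-- `N⁻_σ`. -/
def Nminus (r : ℕ) (η : ℕ → ℕ) (n : ℕ) (σ : Equiv.Perm (Fin n)) : Finset (Fin n × Fin n) :=
  Finset.univ.filter (fun p => blk r η p.2.1 < blk r η p.1.1 ∧ σ p.1 < p.2 ∧ p.1 < σ⁻¹ p.2)

/-- Denert's statistic. -/
def den (r : ℕ) (η : ℕ → ℕ) (n : ℕ) (σ : Equiv.Perm (Fin n)) : ℤ :=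
  (∑ j ∈ Iset r η n σ, (j.1 + 1) : ℕ) + (Nplus r η n σ).card - (Nminus r η n σ).card
    - iexc r η n σ

lemma blk_mono (r : ℕ) (η : ℕ → ℕ) {i j : ℕ} (h : i ≤ j) : blk r η i ≤ blk r η j := by
  apply Finset.card_le_card
  intro k hk
  simp only [Finset.mem_filter] at *
  exact ⟨hk.1, hk.2.trans h⟩

section Aux
variable {n r : ℕ} {η : ℕ → ℕ} {σ : Equiv.Perm (Fin n)}

lemma step_lt (hσ : admissible r η n σ) (x : ℕ) (h : x + 1 < n)
    (heq : blk r η x = blk r η (x + 1)) :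
    σ ⟨x, Nat.lt_of_succ_lt h⟩ < σ ⟨x + 1, h⟩ := by
  by_contra hc
  push_neg at hc
  have hne : σ ⟨x + 1, h⟩ ≠ σ ⟨x, Nat.lt_of_succ_lt h⟩ := by
    intro he
    have := σ.injective he
    simp [Fin.ext_iff] at this
  have hlt : σ ⟨x + 1, h⟩ < σ ⟨x, Nat.lt_of_succ_lt h⟩ := lt_of_le_of_ne hc hne
  have := hσ ⟨x, Nat.lt_of_succ_lt h⟩ h hlt
  simp only [Fin.val_mk] at this
  omega

lemma sameBlock_lt (hσ : admissible r η n σ) :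
    ∀ (d x : ℕ) (hx : x < n) (hxd : x + d + 1 < n),
      blk r η x = blk r η (x + d + 1) → σ ⟨x, hx⟩ < σ ⟨x + d + 1, hxd⟩ := by
  intro d
  induction d with
  | zero => intro x hx hxd heq; exact step_lt hσ x hxd heq
  | succ d ih =>
    intro x hx hxd heq
    have h1 : x + d + 1 < n := by omega
    have hm1 : blk r η x ≤ blk r η (x + d + 1) := blk_mono r η (by omega)
    have hm2 : blk r η (x + d + 1) ≤ blk r η (x + (d + 1) + 1) := blk_mono r η (by omega)
    have e1 : blk r η x = blk r η (x + d + 1) := by omega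
    have e2 : blk r η (x + d + 1) = blk r η (x + d + 1 + 1) := by
      have : x + (d + 1) + 1 = x + d + 1 + 1 := by omega
      rw [this] at heq; omega
    have t1 := ih x hx h1 e1
    have t2 := step_lt hσ (x + d + 1) (by omega) e2
    have hgoal : x + (d + 1) + 1 = x + d + 1 + 1 := by omega
    simp only [hgoal]
    exact lt_trans t1 t2

lemma blk_eq_imp_lt (hσ : admissible r η n σ) {x y : Fin n} (hxy : x < y)
    (h : blk r η x.1 = blk r η y.1) : σ x < σ y := by
  have hxy' : x.1 < y.1 := hxy
  have hd : x.1 + (y.1 - x.1 - 1) + 1 = y.1 := by omega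
  have := sameBlock_lt hσ (y.1 - x.1 - 1) x.1 x.2 (by omega) (by rw [hd]; exact h)
  have hy : (⟨x.1 + (y.1 - x.1 - 1) + 1, by omega⟩ : Fin n) = y := Fin.ext hd
  rw [hy] at this
  exact this

lemma key_iff (hσ : admissible r η n σ) {a b : Fin n} (hab : a < b) :
    σ⁻¹ b < σ⁻¹ a ↔ blk r η (σ⁻¹ b).1 < blk r η (σ⁻¹ a).1 := by
  constructor
  · intro h
    have hle : blk r η (σ⁻¹ b).1 ≤ blk r η (σ⁻¹ a).1 := blk_mono r η (le_of_lt h)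
    rcases lt_or_eq_of_le hle with h' | h'
    · exact h'
    · exfalso
      have := blk_eq_imp_lt hσ h h'
      simp only [show ∀ x, σ (σ⁻¹ x) = x from σ.apply_symm_apply] at this
      exact absurd hab (not_lt_of_gt this)
  · intro h
    by_contra hc
    push_neg at hc
    exact absurd (blk_mono r η (Fin.le_iff_val_le_val.mp hc)) (not_le_of_gt h)

end Aux

/-- `|N⁺_σ[⪯]| = inv(N(π_η(σ⁻¹)))`. -/
theorem NplusPrecEq (n r : ℕ) (η : ℕ → ℕ)
    (hpos : ∀ k < r, 0 < η k) (hsum : ∑ k ∈ Finset.range r, η k = n)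
    (σ : Equiv.Perm (Fin n)) (hσ : admissible r η n σ) :
    (Finset.univ.filter (fun p : Fin n × Fin n =>
        σ p.1 < p.2 ∧ σ⁻¹ p.2 < p.1 ∧ blk r η p.1.1 ≤ blk r η p.2.1 ∧
          blk r η p.1.1 ≤ blk r η ((σ p.1).1))).card
      = invN r η n (wordOf r η n σ) := by
  unfold invN wordOf
  refine Finset.card_bij' (fun p _ => (σ p.1, p.2)) (fun p _ => (σ⁻¹ p.1, p.2))
    ?_ ?_ ?_ ?_
  · intro p hp
    simp only [Finset.mem_filter, Finset.mem_univ, true_and] at hp ⊢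
    obtain ⟨h1, h2, h3, h4⟩ := hp
    have hinv : σ⁻¹ (σ p.1) = p.1 := σ.symm_apply_apply p.1
    refine ⟨h1, ?_, ?_, ?_⟩
    · rw [hinv, not_lt]; exact h4
    · rw [not_lt]
      calc blk r η (σ⁻¹ p.2).1 ≤ blk r η p.1.1 := blk_mono r η (le_of_lt h2)
        _ ≤ blk r η p.2.1 := h3
    · exact (key_iff hσ h1).mp (by rw [hinv]; exact h2)
  · intro p hp
    simp only [Finset.mem_filter, Finset.mem_univ, true_and, not_lt] at hp ⊢
    obtain ⟨h1, h2, h3, h4⟩ := hp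
    have happ : σ (σ⁻¹ p.1) = p.1 := σ.apply_symm_apply p.1
    refine ⟨by rw [happ]; exact h1, ?_, ?_, by rw [happ]; exact h2⟩
    · exact (key_iff hσ h1).mpr h4
    · exact le_trans h2 (blk_mono r η (le_of_lt (Fin.lt_iff_val_lt_val.mp h1)))
  · intro p _; simp
  · intro p _; simp
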